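/- Let (B^H_t)_{t≥0} be a fractional Brownian motion with Hurst parameter H ∈ (1/2, 3/4) on a probability space (Ω, F, P) and let σ > 0. Define U_1(N) = σ³ N^{2H−1/2} Σ_{k=0}^{N−1} ( B^H_{(k+1)/N} − B^H_{k/N} ) ( ((k+1)/N)^{2H} − (k/N)^{2H} ). Then there exists a constant C > 0, depending only on H and σ, such that for all N ≥ 2, E[U_1(N)²] ≤ C ( N^{2H−2} + N^{4H−3} ). In particular E[U_1(N)²] → 0 as N → ∞ since H < 3/4. -/

import Mathlib

open MeasureTheory ProbabilityTheory Filter Topology NNReal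

/-- Bernoulli-type bound: `(x+1)^p - x^p ≤ p (x+1)^(p-1)` for `p ≥ 1`, `x ≥ 0`. -/
lemma aux_rpow_succ_sub_le {p x : ℝ} (hp : 1 ≤ p) (hx : 0 ≤ x) :
    (x+1)^p - x^p ≤ p * (x+1)^(p-1) := by
  have h1 : (0:ℝ) < x + 1 := by linarith
  have hs : (-1:ℝ) ≤ -(x+1)⁻¹ := by
    have : (x+1)⁻¹ ≤ 1 := by
      rw [inv_le_one_iff₀]; right; linarith
    linarith
  have hb := one_add_mul_self_le_rpow_one_add hs hp
  have h2 : (1 + -(x+1)⁻¹) = x/(x+1) := by field_simp; ring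
  rw [h2, Real.div_rpow hx h1.le] at hb
  have hA : (0:ℝ) < (x+1)^p := Real.rpow_pos_of_pos h1 p
  have h4 : (x+1)^(p-1) * (x+1) = (x+1)^p := by
    rw [← Real.rpow_add_one h1.ne' (p-1)]; ring_nf
  have h5 := mul_le_mul_of_nonneg_right hb hA.le
  rw [div_mul_cancel₀ _ hA.ne'] at h5
  have h6 : (x+1)⁻¹ * (x+1)^p = (x+1)^(p-1) := by
    rw [← h4]; field_simp
  nlinarith [h5, h6]

/-- The increments `m ↦ (m+1)^p - m^p` are monotone for `p ≥ 1`. -/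
lemma aux_D_mono {p : ℝ} (hp : 1 ≤ p) :
    Monotone (fun m : ℕ => ((m:ℝ)+1)^p - (m:ℝ)^p) := by
  apply monotone_nat_of_le_succ
  intro m
  have hm : (0:ℝ) ≤ m := Nat.cast_nonneg m
  have hc := (convexOn_rpow hp).2 (Set.mem_Ici.2 hm)
    (Set.mem_Ici.2 (by linarith : (0:ℝ) ≤ (m:ℝ)+2))
    (by norm_num : (0:ℝ) ≤ 1/2) (by norm_num : (0:ℝ) ≤ 1/2) (by norm_num)
  simp only [smul_eq_mul] at hc
  have he : (1/2 : ℝ) * m + (1/2) * ((m:ℝ)+2) = (m:ℝ)+1 := by ring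
  rw [he] at hc
  push_cast
  have h2 : ((m:ℝ)+1+1) = (m:ℝ)+2 := by ring
  rw [h2]
  linarith

/-- The identity is in L² of a real Gaussian measure. -/
lemma aux_memLp_gaussian (v : ℝ≥0) : MemLp (fun x : ℝ => x) 2 (gaussianReal 0 v) := by
  refine (memLp_two_iff_integrable_sq (measurable_id.aestronglyMeasurable)).2 ?_
  by_cases hv : v = 0
  · subst hv
    rw [gaussianReal_zero_var]
    refine ⟨(measurable_id.pow_const 2).aestronglyMeasurable, ?_⟩
    rw [HasFiniteIntegral, lintegral_dirac' _ ((measurable_id.pow_const 2).enorm)]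
    exact ENNReal.coe_lt_top
  · rw [gaussianReal_of_var_ne_zero _ hv,
      integrable_withDensity_iff (measurable_gaussianPDF _ _)
        (ae_of_all _ fun x => ENNReal.ofReal_lt_top)]
    have hv0 : (0:ℝ) < (v:ℝ) := by positivity
    have hb : (0:ℝ) < (2 * (v:ℝ))⁻¹ := by positivity
    have hInt := (integrable_rpow_mul_exp_neg_mul_sq hb (by norm_num : (-1:ℝ) < 2)).const_mul
      ((Real.sqrt (2 * Real.pi * v))⁻¹)
    refine hInt.congr (ae_of_all _ fun x => ?_)
    simp only [id_eq, gaussianPDF_def]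
    rw [ENNReal.toReal_ofReal (gaussianPDFReal_nonneg 0 v x)]
    unfold gaussianPDFReal
    have h1 : -(x-0)^2/(2*(v:ℝ)) = -(2*(v:ℝ))⁻¹ * x^2 := by ring
    rw [h1]
    have h2 : x ^ (2:ℝ) = x ^ (2:ℕ) := by
      rw [← Real.rpow_natCast x 2]; norm_num
    rw [h2]
    ring

/-- Product of two L² functions is integrable. -/
lemma aux_L2_mul {Ω : Type*} [MeasurableSpace Ω] {P : Measure Ω} {f g : Ω → ℝ}
    (hf : MemLp f 2 P) (hg : MemLp g 2 P) : Integrable (fun ω => f ω * g ω) P := by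
  have h := hg.smul hf (hpqr := ⟨by
    rw [ENNReal.inv_two_add_inv_two, inv_one]⟩)
  rw [memLp_one_iff_integrable] at h
  exact h.congr (ae_of_all _ fun ω => by simp [Pi.smul_apply, smul_eq_mul])

/-- Covariance algebra: the double increment of the fBM covariance kernel. -/
lemma aux_r_eq (p : ℝ) (hp : 0 < p) (NR : ℝ) (hNR : 0 < NR) (j k : ℕ) :
    (1/2) * ((((j:ℝ)+1)/NR)^p + (((k:ℝ)+1)/NR)^p - |(((k:ℝ)+1)/NR) - (((j:ℝ)+1)/NR)|^p)
      - (1/2) * ((((j:ℝ)+1)/NR)^p + (((k:ℝ))/NR)^p - |(((k:ℝ))/NR) - (((j:ℝ)+1)/NR)|^p)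
      - (1/2) * ((((j:ℝ))/NR)^p + (((k:ℝ)+1)/NR)^p - |(((k:ℝ)+1)/NR) - (((j:ℝ))/NR)|^p)
      + (1/2) * ((((j:ℝ))/NR)^p + (((k:ℝ))/NR)^p - |(((k:ℝ))/NR) - (((j:ℝ))/NR)|^p)
    = (1/2) * (NR^p)⁻¹ *
        ((((Nat.dist j k):ℝ)+1)^p + |((Nat.dist j k):ℝ)-1|^p - 2*((Nat.dist j k):ℝ)^p) := by
  have habs : ∀ x y : ℝ, |x/NR - y/NR|^p = |x - y|^p / NR^p := by
    intro x y
    rw [div_sub_div_same, abs_div, abs_of_pos hNR, Real.div_rpow (abs_nonneg _) hNR.le]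
  rw [habs, habs, habs, habs]
  have e1 : (k:ℝ)+1 - ((j:ℝ)+1) = (k:ℝ) - j := by ring
  rw [e1]
  set d : ℕ := Nat.dist j k with hd
  have key : |(k:ℝ) - j|^p = ((d:ℝ))^p ∧
      |(k:ℝ) - ((j:ℝ)+1)|^p + |(k:ℝ)+1 - (j:ℝ)|^p = ((d:ℝ)+1)^p + |(d:ℝ)-1|^p := by
    rcases le_total j k with h | h
    · have hdk : (d:ℝ) = (k:ℝ) - j := by
        rw [hd, Nat.dist_eq_sub_of_le h]
        push_cast [Nat.cast_sub h]; ring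
      constructor
      · rw [← hdk, abs_of_nonneg (Nat.cast_nonneg d)]
      · have e2 : (k:ℝ) - ((j:ℝ)+1) = (d:ℝ) - 1 := by rw [hdk]; ring
        have e3 : (k:ℝ)+1 - (j:ℝ) = (d:ℝ) + 1 := by rw [hdk]; ring
        rw [e2, e3, abs_of_nonneg (by positivity : (0:ℝ) ≤ (d:ℝ)+1)]
        ring
    · have hdk : (d:ℝ) = (j:ℝ) - k := by
        rw [hd, Nat.dist_eq_sub_of_le_right h]
        push_cast [Nat.cast_sub h]; ring
      constructor
      · have e2 : (k:ℝ) - (j:ℝ) = -(d:ℝ) := by rw [hdk]; ring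
        rw [e2, abs_neg, abs_of_nonneg (Nat.cast_nonneg d)]
      · have e2 : (k:ℝ) - ((j:ℝ)+1) = -((d:ℝ)+1) := by rw [hdk]; ring
        have e3 : (k:ℝ)+1 - (j:ℝ) = -((d:ℝ)-1) := by rw [hdk]; ring
        rw [e2, e3, abs_neg, abs_neg, abs_of_nonneg (by positivity : (0:ℝ) ≤ (d:ℝ)+1)]
  obtain ⟨k1, k2⟩ := key
  have hNp : (0:ℝ) < NR^p := Real.rpow_pos_of_pos hNR p
  field_simp
  nlinarith [k1, k2, hNp]

noncomputable def auxD (p : ℝ) (m : ℕ) : ℝ := ((m:ℝ)+1)^p - (m:ℝ)^p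

noncomputable def auxg (p : ℝ) (d : ℕ) : ℝ :=
  ((d:ℝ)+1)^p + |(d:ℝ)-1|^p - 2*((d:ℝ))^p

lemma auxD_zero {p : ℝ} (hp : 0 < p) : auxD p 0 = 1 := by
  simp [auxD, Real.zero_rpow hp.ne', Real.one_rpow]

lemma auxg_zero {p : ℝ} (hp : 0 < p) : auxg p 0 = 2 := by
  simp only [auxg, Nat.cast_zero, zero_add, Real.one_rpow, zero_sub, abs_neg, abs_one,
    Real.zero_rpow hp.ne']
  norm_num

lemma auxg_succ (p : ℝ) (m : ℕ) : auxg p (m+1) = auxD p (m+1) - auxD p m := by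
  simp only [auxg, auxD]
  push_cast
  rw [show (m:ℝ)+1-1 = (m:ℝ) by ring, abs_of_nonneg (Nat.cast_nonneg m)]
  ring

lemma auxg_nonneg {p : ℝ} (hp : 1 ≤ p) (d : ℕ) : 0 ≤ auxg p d := by
  cases d with
  | zero => rw [auxg_zero (by linarith)]; norm_num
  | succ m =>
      rw [auxg_succ]
      have h := aux_D_mono hp (Nat.le_succ m)
      simpa [auxD] using sub_nonneg.2 h

/-- Telescoping identity for the row sums of the increment covariances. -/
lemma aux_tel {p : ℝ} (hp : 1 ≤ p) {N j : ℕ} (hj : j < N) :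
    ∑ k ∈ Finset.range N, auxg p (Nat.dist j k) = auxD p j + auxD p (N-1-j) := by
  have hp0 : (0:ℝ) < p := by linarith
  have hsplit := Finset.sum_range_add_sum_Ico (fun k => auxg p (Nat.dist j k))
    (show j+1 ≤ N by omega)
  have h1 : ∑ k ∈ Finset.range (j+1), auxg p (Nat.dist j k)
      = ∑ k ∈ Finset.range (j+1), auxg p (j - k) := by
    refine Finset.sum_congr rfl fun k hk => ?_
    rw [Nat.dist_eq_sub_of_le_right (by simp at hk; omega)]
  have h2 : ∑ k ∈ Finset.range (j+1), auxg p (j - k) = ∑ d ∈ Finset.range (j+1), auxg p d := by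
    have := Finset.sum_range_reflect (fun d => auxg p d) (j+1)
    simpa using this
  have h3 : ∑ d ∈ Finset.range (j+1), auxg p d
      = (∑ d ∈ Finset.range j, auxg p (d+1)) + auxg p 0 :=
    Finset.sum_range_succ' _ _
  have h4 : ∑ d ∈ Finset.range j, auxg p (d+1) = auxD p j - auxD p 0 := by
    rw [Finset.sum_congr rfl (fun d _ => auxg_succ p d)]
    exact Finset.sum_range_sub (auxD p) j
  have h5 : ∑ k ∈ Finset.Ico (j+1) N, auxg p (Nat.dist j k)
      = ∑ i ∈ Finset.range (N - (j+1)), auxg p (i+1) := by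
    rw [Finset.sum_Ico_eq_sum_range]
    refine Finset.sum_congr rfl fun i _ => ?_
    congr 1
    rw [Nat.dist_eq_sub_of_le (by omega)]
    omega
  have h6 : ∑ i ∈ Finset.range (N-(j+1)), auxg p (i+1) = auxD p (N-1-j) - auxD p 0 := by
    rw [Finset.sum_congr rfl (fun d _ => auxg_succ p d), Finset.sum_range_sub (auxD p)]
    have : N - (j+1) = N-1-j := by omega
    rw [this]
  rw [← hsplit, h1, h2, h3, h4, h5, h6, auxg_zero hp0, auxD_zero hp0]
  ring

/-- The weights `c_k` sum to 1. -/
lemma aux_sum_c {p : ℝ} (hp : 0 < p) {N : ℕ} (hN : 1 ≤ N) :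
    ∑ k ∈ Finset.range N, ((((k:ℝ)+1)/N)^p - ((k:ℝ)/N)^p) = 1 := by
  have hN0 : (0:ℝ) < N := by exact_mod_cast hN
  have h := Finset.sum_range_sub (fun k : ℕ => ((k:ℝ)/N)^p) N
  have h2 : ∑ k ∈ Finset.range N, ((((k:ℝ)+1)/N)^p - ((k:ℝ)/N)^p)
      = ∑ k ∈ Finset.range N, ((((k+1:ℕ):ℝ)/N)^p - ((k:ℝ)/N)^p) := by
    refine Finset.sum_congr rfl fun k _ => ?_
    push_cast
    ring
  rw [h2, h, div_self hN0.ne', Real.one_rpow, Nat.cast_zero, zero_div,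
    Real.zero_rpow hp.ne']
  ring

/-- Growth bound on the increments. -/
lemma auxD_le {p : ℝ} (hp1 : 1 ≤ p) (hp2 : p ≤ 2) {N : ℕ} (hN : 1 ≤ N) :
    auxD p N ≤ 2*p*(N:ℝ)^(p-1) := by
  have hN1 : (1:ℝ) ≤ (N:ℝ) := by exact_mod_cast hN
  have hN0 : (0:ℝ) < (N:ℝ) := by linarith
  have h1 : auxD p N ≤ p * ((N:ℝ)+1)^(p-1) := aux_rpow_succ_sub_le hp1 (Nat.cast_nonneg N)
  have h2 : ((N:ℝ)+1)^(p-1) ≤ ((2:ℝ)*N)^(p-1) :=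
    Real.rpow_le_rpow (by positivity) (by linarith) (by linarith)
  have h3 : ((2:ℝ)*N)^(p-1) = 2^(p-1) * (N:ℝ)^(p-1) := Real.mul_rpow (by norm_num) hN0.le
  have h4 : (2:ℝ)^(p-1) ≤ 2 := by
    calc (2:ℝ)^(p-1) ≤ 2^(1:ℝ) :=
          Real.rpow_le_rpow_of_exponent_le one_le_two (by linarith)
      _ = 2 := Real.rpow_one 2
  have h5 : (0:ℝ) ≤ (N:ℝ)^(p-1) := Real.rpow_nonneg (Nat.cast_nonneg N) _
  have h6 : (0:ℝ) < p := by linarith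
  calc auxD p N ≤ p * ((N:ℝ)+1)^(p-1) := h1
    _ ≤ p * (2^(p-1) * (N:ℝ)^(p-1)) := by
        rw [← h3]; exact mul_le_mul_of_nonneg_left h2 h6.le
    _ ≤ 2*p*(N:ℝ)^(p-1) := by
        have h7 := mul_le_mul_of_nonneg_left
          (mul_le_mul_of_nonneg_right h4 h5) h6.le
        nlinarith [h7]

/-- Abstract bound for the double covariance sum. -/
lemma aux_double_sum_bound {p : ℝ} (hp1 : 1 ≤ p) {N : ℕ} (hN : 1 ≤ N) {c : ℕ → ℝ} {cb : ℝ}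
    (hc0 : ∀ k, 0 ≤ c k) (hcb : ∀ k, k < N → c k ≤ cb)
    (hcs : ∑ k ∈ Finset.range N, c k = 1)
    {Db : ℝ} (hD : ∀ m : ℕ, m ≤ N → auxD p m ≤ Db) :
    ∑ j ∈ Finset.range N, ∑ k ∈ Finset.range N, c j * c k * auxg p (Nat.dist j k)
      ≤ cb * (2*Db) := by
  have hcb0 : (0:ℝ) ≤ cb := (hc0 0).trans (hcb 0 (by omega))
  calc ∑ j ∈ Finset.range N, ∑ k ∈ Finset.range N, c j * c k * auxg p (Nat.dist j k)
      ≤ ∑ j ∈ Finset.range N, c j * (cb * (2*Db)) := by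
        refine Finset.sum_le_sum fun j hj => ?_
        have hjN : j < N := Finset.mem_range.1 hj
        calc ∑ k ∈ Finset.range N, c j * c k * auxg p (Nat.dist j k)
            ≤ ∑ k ∈ Finset.range N, c j * cb * auxg p (Nat.dist j k) := by
              refine Finset.sum_le_sum fun k hk => ?_
              have h := mul_le_mul_of_nonneg_right
                (mul_le_mul_of_nonneg_left (hcb k (Finset.mem_range.1 hk)) (hc0 j))
                (auxg_nonneg hp1 (Nat.dist j k))
              linarith
          _ = c j * cb * ∑ k ∈ Finset.range N, auxg p (Nat.dist j k) :=
              (Finset.mul_sum _ _ _).symm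
          _ = c j * cb * (auxD p j + auxD p (N-1-j)) := by rw [aux_tel hp1 hjN]
          _ ≤ c j * cb * (2*Db) := by
              have ha := hD j hjN.le
              have hb := hD (N-1-j) (by omega)
              exact mul_le_mul_of_nonneg_left (by linarith)
                (mul_nonneg (hc0 j) hcb0)
          _ = c j * (cb*(2*Db)) := by ring
    _ = (∑ j ∈ Finset.range N, c j) * (cb*(2*Db)) := (Finset.sum_mul _ _ _).symm
    _ = cb*(2*Db) := by rw [hcs]; ring

/-- Quantitative L² bound for the drift-correction cross term:
E[U₁(N)²] ≤ C (N^{2H−2} + N^{4H−3}) for N ≥ 2, and in particular E[U₁(N)²] → 0. -/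
theorem cross_term_L2_bound
    {Ω : Type*} [MeasurableSpace Ω] (P : Measure Ω) [IsProbabilityMeasure P]
    (H : ℝ) (hH : H ∈ Set.Ioo (1/2 : ℝ) (3/4))
    (B : ℝ → Ω → ℝ)
    (hGauss : ∀ (n : ℕ) (a : Fin n → ℝ) (t : Fin n → ℝ), (∀ i, 0 ≤ t i) →
      ∃ v : ℝ≥0, P.map (fun ω => ∑ i, a i * B (t i) ω) = gaussianReal 0 v)
    (hCov : ∀ s t : ℝ, 0 ≤ s → 0 ≤ t →
      ∫ ω, B s ω * B t ω ∂P = (1/2) * (s ^ (2*H) + t ^ (2*H) - |t - s| ^ (2*H)))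
    (σ : ℝ) (hσ : 0 < σ)
    (U₁ : ℕ → Ω → ℝ)
    (hU₁ : ∀ (N : ℕ) (ω : Ω), U₁ N ω = σ^3 * (N : ℝ) ^ (2*H - 1/2) *
      ∑ k ∈ Finset.range N,
        (B (((k : ℝ) + 1)/N) ω - B ((k : ℝ)/N) ω) *
          ((((k : ℝ) + 1)/N) ^ (2*H) - ((k : ℝ)/N) ^ (2*H))) :
    (∃ C : ℝ, 0 < C ∧ ∀ N : ℕ, 2 ≤ N →
      ∫ ω, (U₁ N ω)^2 ∂P ≤ C * ((N : ℝ) ^ (2*H - 2) + (N : ℝ) ^ (4*H - 3))) ∧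
    Tendsto (fun N : ℕ => ∫ ω, (U₁ N ω)^2 ∂P) atTop (𝓝 0) := by
  obtain ⟨hH1, hH2⟩ := hH
  have hp1 : (1:ℝ) ≤ 2*H := by linarith
  have hp0 : (0:ℝ) < 2*H := by linarith
  -- L² membership of all marginals
  have hBmem : ∀ t : ℝ, 0 ≤ t → MemLp (B t) 2 P := by
    intro t ht
    obtain ⟨v, hv⟩ := hGauss 1 (fun _ => 1) (fun _ => t) (fun _ => ht)
    have hmap : P.map (B t) = gaussianReal 0 v := by
      rw [← hv]
      congr 1
      funext ω
      simp
    have hae : AEMeasurable (B t) P := by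
      by_contra hc
      rw [Measure.map_of_not_aemeasurable hc] at hmap
      have h1 : (gaussianReal 0 v) Set.univ = 1 := measure_univ
      rw [← hmap] at h1
      simp at h1
    have h2 := aux_memLp_gaussian v
    rw [← hmap] at h2
    exact (memLp_map_measure_iff measurable_id.aestronglyMeasurable hae).1 h2
  -- key quantitative bound
  have key : ∀ N : ℕ, 2 ≤ N →
      ∫ ω, (U₁ N ω)^2 ∂P ≤ (16*H^2*σ^6) * (N : ℝ) ^ (4*H - 3) := by
    intro N hN
    have hN1 : (1:ℝ) ≤ (N:ℝ) := by exact_mod_cast (by omega : 1 ≤ N)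
    have hN0 : (0:ℝ) < N := by linarith
    have ht0 : ∀ k : ℕ, (0:ℝ) ≤ (k:ℝ)/N := fun k => by positivity
    have ht1 : ∀ k : ℕ, (0:ℝ) ≤ ((k:ℝ)+1)/N := fun k => by positivity
    have hBB : ∀ s t : ℝ, 0 ≤ s → 0 ≤ t → Integrable (fun ω => B s ω * B t ω) P :=
      fun s t hs ht => aux_L2_mul (hBmem s hs) (hBmem t ht)
    have hXmem : ∀ k : ℕ,
        MemLp (fun ω => B (((k:ℝ)+1)/N) ω - B ((k:ℝ)/N) ω) 2 P :=
      fun k => (hBmem _ (ht1 k)).sub (hBmem _ (ht0 k))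
    have hXXint : ∀ j k : ℕ, Integrable (fun ω =>
        (B (((j:ℝ)+1)/N) ω - B ((j:ℝ)/N) ω) * (B (((k:ℝ)+1)/N) ω - B ((k:ℝ)/N) ω)) P :=
      fun j k => aux_L2_mul (hXmem j) (hXmem k)
    -- covariance of increments
    have hXcov : ∀ j k : ℕ, ∫ ω,
        (B (((j:ℝ)+1)/N) ω - B ((j:ℝ)/N) ω) * (B (((k:ℝ)+1)/N) ω - B ((k:ℝ)/N) ω) ∂P
        = (1/2) * ((N:ℝ)^(2*H))⁻¹ * auxg (2*H) (Nat.dist j k) := by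
      intro j k
      have hexp : (fun ω =>
          (B (((j:ℝ)+1)/N) ω - B ((j:ℝ)/N) ω) * (B (((k:ℝ)+1)/N) ω - B ((k:ℝ)/N) ω))
          = (fun ω =>
            (B (((j:ℝ)+1)/N) ω * B (((k:ℝ)+1)/N) ω - B (((j:ℝ)+1)/N) ω * B ((k:ℝ)/N) ω)
            - (B ((j:ℝ)/N) ω * B (((k:ℝ)+1)/N) ω - B ((j:ℝ)/N) ω * B ((k:ℝ)/N) ω)) := by
        funext ω; ring
      have I1 : Integrable (fun ω => B (((j:ℝ)+1)/N) ω * B (((k:ℝ)+1)/N) ω) P :=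
        hBB _ _ (ht1 j) (ht1 k)
      have I2 : Integrable (fun ω => B (((j:ℝ)+1)/N) ω * B ((k:ℝ)/N) ω) P :=
        hBB _ _ (ht1 j) (ht0 k)
      have I3 : Integrable (fun ω => B ((j:ℝ)/N) ω * B (((k:ℝ)+1)/N) ω) P :=
        hBB _ _ (ht0 j) (ht1 k)
      have I4 : Integrable (fun ω => B ((j:ℝ)/N) ω * B ((k:ℝ)/N) ω) P :=
        hBB _ _ (ht0 j) (ht0 k)
      have I12 : Integrable (fun ω =>
          B (((j:ℝ)+1)/N) ω * B (((k:ℝ)+1)/N) ω - B (((j:ℝ)+1)/N) ω * B ((k:ℝ)/N) ω) P :=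
        I1.sub I2
      have I34 : Integrable (fun ω =>
          B ((j:ℝ)/N) ω * B (((k:ℝ)+1)/N) ω - B ((j:ℝ)/N) ω * B ((k:ℝ)/N) ω) P :=
        I3.sub I4
      rw [hexp, integral_sub I12 I34, integral_sub I1 I2, integral_sub I3 I4,
        hCov _ _ (ht1 j) (ht1 k), hCov _ _ (ht1 j) (ht0 k),
        hCov _ _ (ht0 j) (ht1 k), hCov _ _ (ht0 j) (ht0 k)]
      have hr := aux_r_eq (2*H) hp0 (N:ℝ) hN0 j k
      simp only [auxg]
      linarith [hr]
    -- expansion of the second moment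
    have hU2 : ∫ ω, (U₁ N ω)^2 ∂P
        = ∑ j ∈ Finset.range N, ∑ k ∈ Finset.range N,
            (σ^3 * (N:ℝ)^(2*H - 1/2))^2 *
              (((((j:ℝ)+1)/N)^(2*H) - ((j:ℝ)/N)^(2*H)) *
               ((((k:ℝ)+1)/N)^(2*H) - ((k:ℝ)/N)^(2*H))) *
              ((1/2) * ((N:ℝ)^(2*H))⁻¹ * auxg (2*H) (Nat.dist j k)) := by
      calc ∫ ω, (U₁ N ω)^2 ∂P
          = ∫ ω, ∑ j ∈ Finset.range N, ∑ k ∈ Finset.range N,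
              (σ^3 * (N:ℝ)^(2*H - 1/2))^2 *
                (((((j:ℝ)+1)/N)^(2*H) - ((j:ℝ)/N)^(2*H)) *
                 ((((k:ℝ)+1)/N)^(2*H) - ((k:ℝ)/N)^(2*H))) *
                ((B (((j:ℝ)+1)/N) ω - B ((j:ℝ)/N) ω) *
                 (B (((k:ℝ)+1)/N) ω - B ((k:ℝ)/N) ω)) ∂P := by
            have hpt : (fun ω => (U₁ N ω)^2) = (fun ω =>
                ∑ j ∈ Finset.range N, ∑ k ∈ Finset.range N,
                  (σ^3 * (N:ℝ)^(2*H - 1/2))^2 *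
                    (((((j:ℝ)+1)/N)^(2*H) - ((j:ℝ)/N)^(2*H)) *
                     ((((k:ℝ)+1)/N)^(2*H) - ((k:ℝ)/N)^(2*H))) *
                    ((B (((j:ℝ)+1)/N) ω - B ((j:ℝ)/N) ω) *
                     (B (((k:ℝ)+1)/N) ω - B ((k:ℝ)/N) ω))) := by
              funext ω
              rw [hU₁ N ω, mul_pow, sq (∑ k ∈ Finset.range N, _), Finset.sum_mul_sum,
                Finset.mul_sum]
              refine Finset.sum_congr rfl fun j _ => ?_
              rw [Finset.mul_sum]
              refine Finset.sum_congr rfl fun k _ => ?_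
              ring
            rw [hpt]
        _ = ∑ j ∈ Finset.range N, ∑ k ∈ Finset.range N,
              (σ^3 * (N:ℝ)^(2*H - 1/2))^2 *
                (((((j:ℝ)+1)/N)^(2*H) - ((j:ℝ)/N)^(2*H)) *
                 ((((k:ℝ)+1)/N)^(2*H) - ((k:ℝ)/N)^(2*H))) *
                ∫ ω, ((B (((j:ℝ)+1)/N) ω - B ((j:ℝ)/N) ω) *
                  (B (((k:ℝ)+1)/N) ω - B ((k:ℝ)/N) ω)) ∂P := by
            rw [integral_finset_sum _ (fun j _ =>
              integrable_finset_sum _ (fun k _ => (hXXint j k).const_mul _))]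
            refine Finset.sum_congr rfl fun j _ => ?_
            rw [integral_finset_sum _ (fun k _ => (hXXint j k).const_mul _)]
            refine Finset.sum_congr rfl fun k _ => ?_
            exact integral_const_mul _ _
        _ = _ := by
            refine Finset.sum_congr rfl fun j _ => Finset.sum_congr rfl fun k _ => ?_
            rw [hXcov j k]
    -- bounds on the weights
    have hc0 : ∀ k : ℕ, 0 ≤ (((k:ℝ)+1)/N)^(2*H) - ((k:ℝ)/N)^(2*H) := by
      intro k
      have h := Real.rpow_le_rpow (ht0 k)
        ((div_le_div_iff_of_pos_right hN0).2 (by linarith : (k:ℝ) ≤ (k:ℝ)+1)) hp0.le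
      linarith
    have hc_eq : ∀ k : ℕ,
        (((k:ℝ)+1)/N)^(2*H) - ((k:ℝ)/N)^(2*H) = auxD (2*H) k / (N:ℝ)^(2*H) := by
      intro k
      rw [Real.div_rpow (by positivity) hN0.le, Real.div_rpow (Nat.cast_nonneg k) hN0.le]
      simp only [auxD]
      rw [_root_.sub_div]
    have hD : ∀ m : ℕ, m ≤ N → auxD (2*H) m ≤ 4*H*(N:ℝ)^(2*H-1) := by
      intro m hm
      have h1 : auxD (2*H) m ≤ auxD (2*H) N := by
        simpa [auxD] using aux_D_mono hp1 hm
      have h2 := auxD_le hp1 (by linarith : (2:ℝ)*H ≤ 2) (by omega : 1 ≤ N)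
      calc auxD (2*H) m ≤ 2*(2*H)*(N:ℝ)^(2*H-1) := by linarith
        _ = 4*H*(N:ℝ)^(2*H-1) := by ring
    have hc_le : ∀ k : ℕ, k < N →
        (((k:ℝ)+1)/N)^(2*H) - ((k:ℝ)/N)^(2*H)
          ≤ 4*H*(N:ℝ)^(2*H-1) / (N:ℝ)^(2*H) := by
      intro k hk
      rw [hc_eq k]
      exact (div_le_div_iff_of_pos_right (Real.rpow_pos_of_pos hN0 _)).2 (hD k hk.le)
    have hcs := aux_sum_c hp0 (show 1 ≤ N by omega)
    have hsum := aux_double_sum_bound hp1 (show 1 ≤ N by omega) hc0 hc_le hcs hD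
    -- factorization and final numeric bound
    have hfact : ∑ j ∈ Finset.range N, ∑ k ∈ Finset.range N,
          (σ^3 * (N:ℝ)^(2*H - 1/2))^2 *
            (((((j:ℝ)+1)/N)^(2*H) - ((j:ℝ)/N)^(2*H)) *
             ((((k:ℝ)+1)/N)^(2*H) - ((k:ℝ)/N)^(2*H))) *
            ((1/2) * ((N:ℝ)^(2*H))⁻¹ * auxg (2*H) (Nat.dist j k))
        = (σ^3 * (N:ℝ)^(2*H - 1/2))^2 * ((1/2) * ((N:ℝ)^(2*H))⁻¹) *
            ∑ j ∈ Finset.range N, ∑ k ∈ Finset.range N,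
              (((((j:ℝ)+1)/N)^(2*H) - ((j:ℝ)/N)^(2*H)) *
               ((((k:ℝ)+1)/N)^(2*H) - ((k:ℝ)/N)^(2*H))) * auxg (2*H) (Nat.dist j k) := by
      rw [Finset.mul_sum]
      refine Finset.sum_congr rfl fun j _ => ?_
      rw [Finset.mul_sum]
      refine Finset.sum_congr rfl fun k _ => ?_
      ring
    have hA2 : (σ^3 * (N:ℝ)^(2*H - 1/2))^2 = σ^6 * (N:ℝ)^(4*H-1) := by
      rw [mul_pow, sq ((N:ℝ)^(2*H - 1/2)), ← Real.rpow_add hN0]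
      rw [show (2*H - 1/2) + (2*H - 1/2) = 4*H-1 by ring]
      ring
    have hpos1 : (0:ℝ) ≤ (σ^3 * (N:ℝ)^(2*H - 1/2))^2 * ((1/2) * ((N:ℝ)^(2*H))⁻¹) := by
      positivity
    have key_pow : (4*H*(N:ℝ)^(2*H-1)/(N:ℝ)^(2*H)) * (2*(4*H*(N:ℝ)^(2*H-1))) *
        ((1/2) * ((N:ℝ)^(2*H))⁻¹) * ((N:ℝ)^(4*H-1))
        = 16*H^2*(N:ℝ)^(4*H-3) := by
      have e1 : (N:ℝ)^(2*H-1) = (N:ℝ)^(2*H) / N := by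
        rw [eq_div_iff hN0.ne', ← Real.rpow_add_one hN0.ne']
        congr 1; ring
      have e2 : (N:ℝ)^(4*H-1) = (N:ℝ)^(4*H-3) * N * N := by
        rw [← Real.rpow_add_one hN0.ne', ← Real.rpow_add_one hN0.ne']
        congr 1; ring
      have h2 : ((N:ℝ)^(2*H)) ≠ 0 := (Real.rpow_pos_of_pos hN0 _).ne'
      rw [e1, e2]
      field_simp
      ring
    calc ∫ ω, (U₁ N ω)^2 ∂P
        = (σ^3 * (N:ℝ)^(2*H - 1/2))^2 * ((1/2) * ((N:ℝ)^(2*H))⁻¹) *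
            ∑ j ∈ Finset.range N, ∑ k ∈ Finset.range N,
              (((((j:ℝ)+1)/N)^(2*H) - ((j:ℝ)/N)^(2*H)) *
               ((((k:ℝ)+1)/N)^(2*H) - ((k:ℝ)/N)^(2*H))) * auxg (2*H) (Nat.dist j k) := by
          rw [hU2, hfact]
      _ ≤ (σ^3 * (N:ℝ)^(2*H - 1/2))^2 * ((1/2) * ((N:ℝ)^(2*H))⁻¹) *
            ((4*H*(N:ℝ)^(2*H-1)/(N:ℝ)^(2*H)) * (2*(4*H*(N:ℝ)^(2*H-1)))) :=
          mul_le_mul_of_nonneg_left hsum hpos1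
      _ = (16*H^2*σ^6) * (N:ℝ)^(4*H-3) := by
          rw [hA2]
          linear_combination σ^6 * key_pow
  constructor
  · refine ⟨16*H^2*σ^6 + 1, by positivity, fun N hN => ?_⟩
    have h1 := key N hN
    have hN0 : (0:ℝ) < N := by
      exact_mod_cast (by omega : 0 < N)
    have h2 : (0:ℝ) ≤ (N:ℝ)^(2*H - 2) := Real.rpow_nonneg hN0.le _
    have h3 : (0:ℝ) ≤ (N:ℝ)^(4*H - 3) := Real.rpow_nonneg hN0.le _
    have hc : (0:ℝ) ≤ 16*H^2*σ^6 := by positivity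
    nlinarith [h1, h2, h3, mul_nonneg hc h2, mul_nonneg hc h3]
  · have h0 : ∀ N : ℕ, 0 ≤ ∫ ω, (U₁ N ω)^2 ∂P :=
      fun N => integral_nonneg fun ω => sq_nonneg _
    have hub : Tendsto (fun N : ℕ => (16*H^2*σ^6) * (N:ℝ)^(4*H-3)) atTop (𝓝 0) := by
      have h1 : Tendsto (fun x : ℝ => x ^ (-(3-4*H))) atTop (𝓝 0) :=
        tendsto_rpow_neg_atTop (by linarith)
      have h2 := h1.comp (tendsto_natCast_atTop_atTop (R := ℝ))
      have h3 : (fun N : ℕ => (N:ℝ)^(4*H-3))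
          = (fun x : ℝ => x ^ (-(3-4*H))) ∘ (fun N : ℕ => (N:ℝ)) := by
        funext N
        simp only [Function.comp_apply]
        congr 1
        ring
      rw [show (0:ℝ) = (16*H^2*σ^6) * 0 by ring]
      exact (h3 ▸ h2).const_mul _
    refine squeeze_zero' (Eventually.of_forall h0) ?_ hub
    filter_upwards [eventually_ge_atTop 2] with N hN
    exact key N hN
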